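/- Let Δ ∈ Σ_∞ be a set in the tail σ-algebra of Ξ = 𝒳^ℕ and let (μ_m)_{m∈ℕ} be a sequence of finite measures on (Ξ, Σ). Then there exist strictly increasing sequences (i_n), (j_n) with i_n < j_n and sets Δ_n measurable with respect to the σ-algebra Σ_{i_n,j_n} generated by the coordinates ξ_{i_n},…,ξ_{j_n}, such that μ_m(Δ_n Δ Δ) < 1/n for all m ≤ n (symmetric difference). -/

import Mathlib

open MeasureTheory Filter
open scoped ENNReal BigOperators symmDiff

noncomputable section

/-- `Σ_n`: the σ-algebra of events not depending on the first `n` coordinates,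
realized as the pullback of the product σ-algebra under the shift by `n`. -/
def shiftAlg (𝒳 : Type*) [MeasurableSpace 𝒳] (n : ℕ) : MeasurableSpace (ℕ → 𝒳) :=
  MeasurableSpace.comap (fun (x : ℕ → 𝒳) (i : ℕ) => x (i + n))
    (inferInstance : MeasurableSpace (ℕ → 𝒳))

/-- The tail σ-algebra `Σ_∞ = ⋂_n Σ_n`. -/
def tailAlg (𝒳 : Type*) [MeasurableSpace 𝒳] : MeasurableSpace (ℕ → 𝒳) :=
  ⨅ n : ℕ, shiftAlg 𝒳 n

/-- `Σ_{m,n}`: the σ-algebra of events depending only on the coordinates `m, …, n`. -/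
def blockAlg (𝒳 : Type*) [MeasurableSpace 𝒳] (m n : ℕ) : MeasurableSpace (ℕ → 𝒳) :=
  MeasurableSpace.comap (fun (x : ℕ → 𝒳) (i : Fin (n + 1 - m)) => x (m + (i : ℕ)))
    (inferInstance : MeasurableSpace (Fin (n + 1 - m) → 𝒳))


section AuxBlockAlg
variable (𝒳 : Type*) [MeasurableSpace 𝒳]

lemma blockAlg_mono (i : ℕ) {j j' : ℕ} (h : j ≤ j') :
    blockAlg 𝒳 i j ≤ blockAlg 𝒳 i j' := by
  have hle : j + 1 - i ≤ j' + 1 - i := by omega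
  have hcomp : (fun (x : ℕ → 𝒳) (k : Fin (j + 1 - i)) => x (i + (k : ℕ))) =
      (fun (y : Fin (j' + 1 - i) → 𝒳) (k : Fin (j + 1 - i)) =>
        y ⟨(k : ℕ), lt_of_lt_of_le k.2 hle⟩) ∘
      (fun (x : ℕ → 𝒳) (k : Fin (j' + 1 - i)) => x (i + (k : ℕ))) := rfl
  rw [blockAlg, blockAlg, hcomp, ← MeasurableSpace.comap_comp]
  exact MeasurableSpace.comap_mono
    (Measurable.comap_le (measurable_pi_lambda _ fun k => measurable_pi_apply _))

lemma blockAlg_le_shiftAlg (i j : ℕ) : blockAlg 𝒳 i j ≤ shiftAlg 𝒳 i := by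
  have hcomp : (fun (x : ℕ → 𝒳) (k : Fin (j + 1 - i)) => x (i + (k : ℕ))) =
      (fun (y : ℕ → 𝒳) (k : Fin (j + 1 - i)) => y (k : ℕ)) ∘
      (fun (x : ℕ → 𝒳) (m : ℕ) => x (m + i)) := by
    funext x k
    simp only [Function.comp_apply]
    congr 1
    omega
  rw [blockAlg, shiftAlg, hcomp, ← MeasurableSpace.comap_comp]
  exact MeasurableSpace.comap_mono
    (Measurable.comap_le (measurable_pi_lambda _ fun k => measurable_pi_apply _))

lemma shiftAlg_eq_iSup (i : ℕ) : shiftAlg 𝒳 i = ⨆ j, blockAlg 𝒳 i j := by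
  apply le_antisymm
  · rw [shiftAlg]
    have hpi : (inferInstance : MeasurableSpace (ℕ → 𝒳)) =
        ⨆ m : ℕ, MeasurableSpace.comap (fun x : ℕ → 𝒳 => x m) inferInstance := rfl
    rw [hpi, MeasurableSpace.comap_iSup]
    refine iSup_le fun m => ?_
    rw [MeasurableSpace.comap_comp]
    refine le_trans ?_ (le_iSup _ (i + m))
    have hm : m < i + m + 1 - i := by omega
    have hcomp : ((fun x : ℕ → 𝒳 => x m) ∘ (fun x (k : ℕ) => x (k + i))) =
        (fun (y : Fin (i + m + 1 - i) → 𝒳) => y ⟨m, hm⟩) ∘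
        (fun (x : ℕ → 𝒳) (k : Fin (i + m + 1 - i)) => x (i + (k : ℕ))) := by
      funext x
      simp only [Function.comp_apply]
      congr 1
      omega
    rw [hcomp, ← MeasurableSpace.comap_comp, blockAlg]
    exact MeasurableSpace.comap_mono (Measurable.comap_le (measurable_pi_apply _))
  · exact iSup_le fun j => blockAlg_le_shiftAlg 𝒳 i j

lemma shiftAlg_le_pi (i : ℕ) :
    shiftAlg 𝒳 i ≤ (inferInstance : MeasurableSpace (ℕ → 𝒳)) :=
  Measurable.comap_le (measurable_pi_lambda _ fun k => measurable_pi_apply _)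

lemma ofReal_one_div_succ_le (n : ℕ) :
    ENNReal.ofReal (1 / (n + 1)) ≤ 1 / (n : ℝ≥0∞) := by
  cases n with
  | zero => simp
  | succ k =>
    have h1 : (1 : ℝ≥0∞) / ((k + 1 : ℕ) : ℝ≥0∞) = ENNReal.ofReal (1 / ((k + 1 : ℕ) : ℝ)) := by
      rw [ENNReal.ofReal_div_of_pos (by positivity), ENNReal.ofReal_one, ENNReal.ofReal_natCast]
    rw [h1]
    refine ENNReal.ofReal_le_ofReal ?_
    push_cast
    gcongr
    linarith

end AuxBlockAlg

/-- a tail event can be simultaneously approximated, for countably many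
finite measures, by events depending on coordinates `i_n, …, j_n` only. -/
theorem approx_tail_event_by_blocks
    {𝒳 : Type*} [Fintype 𝒳] [Nonempty 𝒳] [MeasurableSpace 𝒳] [MeasurableSingletonClass 𝒳]
    (μ : ℕ → Measure (ℕ → 𝒳)) [∀ m, IsFiniteMeasure (μ m)]
    (Δ : Set (ℕ → 𝒳)) (hΔ : MeasurableSet[tailAlg 𝒳] Δ) :
    ∃ i j : ℕ → ℕ, StrictMono i ∧ StrictMono j ∧ (∀ n, i n < j n) ∧
      ∃ Δs : ℕ → Set (ℕ → 𝒳),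
        (∀ n, MeasurableSet[blockAlg 𝒳 (i n) (j n)] (Δs n)) ∧
        (∀ n : ℕ, ∀ m ≤ n, μ m (Δs n ∆ Δ) < 1 / (n : ℝ≥0∞)) := by
  -- For each `n`, we find a block-measurable approximation of `Δ` at some level `ℓ n`.
  have hex : ∀ n : ℕ, ∃ ℓ : ℕ, ∃ t : Set (ℕ → 𝒳),
      MeasurableSet[blockAlg 𝒳 n ℓ] t ∧ ∀ m ≤ n, μ m (t ∆ Δ) < 1 / (n : ℝ≥0∞) := by
    intro n
    set ν : Measure (ℕ → 𝒳) := ∑ m ∈ Finset.range (n + 1), μ m with hν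
    haveI hνfin : IsFiniteMeasure ν := by
      constructor
      rw [hν, Measure.finset_sum_apply]
      exact ENNReal.sum_lt_top.2 fun m _ => measure_lt_top _ _
    have hle : shiftAlg 𝒳 n ≤ (inferInstance : MeasurableSpace (ℕ → 𝒳)) :=
      shiftAlg_le_pi 𝒳 n
    set 𝒜 : Set (Set (ℕ → 𝒳)) := ⋃ j, {s | MeasurableSet[blockAlg 𝒳 n j] s} with h𝒜def
    have h𝒜 : MeasureTheory.IsSetAlgebra 𝒜 := by
      constructor
      · exact Set.mem_iUnion.2 ⟨0, @MeasurableSet.empty _ (blockAlg 𝒳 n 0)⟩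
      · rintro s hs
        obtain ⟨j, hj⟩ := Set.mem_iUnion.1 hs
        have hj' : MeasurableSet[blockAlg 𝒳 n j] s := hj
        exact Set.mem_iUnion.2 ⟨j, hj'.compl⟩
      · rintro s u hs hu
        obtain ⟨j₁, hj₁⟩ := Set.mem_iUnion.1 hs
        obtain ⟨j₂, hj₂⟩ := Set.mem_iUnion.1 hu
        have hj₁' : MeasurableSet[blockAlg 𝒳 n (max j₁ j₂)] s :=
          blockAlg_mono 𝒳 n (le_max_left _ _) _ hj₁
        have hj₂' : MeasurableSet[blockAlg 𝒳 n (max j₁ j₂)] u :=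
          blockAlg_mono 𝒳 n (le_max_right _ _) _ hj₂
        exact Set.mem_iUnion.2 ⟨max j₁ j₂, hj₁'.union hj₂'⟩
    have hgen : shiftAlg 𝒳 n = MeasurableSpace.generateFrom 𝒜 := by
      rw [shiftAlg_eq_iSup]
      exact (MeasurableSpace.generateFrom_iUnion_measurableSet _).symm
    haveI hνtrimfin := isFiniteMeasure_trim (μ := ν) hle
    have md := Measure.MeasureDense.of_generateFrom_isSetAlgebra_finite
      (m := shiftAlg 𝒳 n) (μ := ν.trim hle) h𝒜 hgen
    have hΔmeas : MeasurableSet[shiftAlg 𝒳 n] Δ := (iInf_le (shiftAlg 𝒳) n) Δ hΔ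
    have hfin : ν.trim hle Δ ≠ ∞ := by
      rw [trim_measurableSet_eq hle hΔmeas]
      exact measure_ne_top ν Δ
    obtain ⟨t, ht𝒜, happrox⟩ :=
      Measure.MeasureDense.approx (m := shiftAlg 𝒳 n) md Δ hΔmeas hfin (1 / (n + 1)) (by positivity)
    obtain ⟨ℓ, htℓmem⟩ := Set.mem_iUnion.1 ht𝒜
    have htℓ : MeasurableSet[blockAlg 𝒳 n ℓ] t := htℓmem
    refine ⟨ℓ, t, htℓ, fun m hm => ?_⟩
    have htshift : MeasurableSet[shiftAlg 𝒳 n] t := blockAlg_le_shiftAlg 𝒳 n ℓ t htℓ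
    have hsd : MeasurableSet[shiftAlg 𝒳 n] (Δ ∆ t) :=
      hΔmeas.symmDiff htshift
    have heq : ν.trim hle (Δ ∆ t) = ν (Δ ∆ t) := trim_measurableSet_eq hle hsd
    have hμν : μ m (t ∆ Δ) ≤ ν (t ∆ Δ) := by
      rw [hν, Measure.finset_sum_apply]
      exact Finset.single_le_sum (f := fun m => μ m (t ∆ Δ))
        (fun _ _ => zero_le) (Finset.mem_range.2 (by omega))
    calc μ m (t ∆ Δ) ≤ ν (t ∆ Δ) := hμν
      _ = ν.trim hle (Δ ∆ t) := by rw [heq, symmDiff_comm]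
      _ < ENNReal.ofReal (1 / (n + 1)) := happrox
      _ ≤ 1 / (n : ℝ≥0∞) := ofReal_one_div_succ_le n
  choose ℓ t ht hbound using hex
  refine ⟨fun n => n, fun n => n + 1 + (Finset.range (n + 1)).sup ℓ,
    strictMono_id, ?_, fun n => ?_, t, fun n => ?_, fun n m hm => hbound n m hm⟩
  · refine strictMono_nat_of_lt_succ fun n => ?_
    show n + 1 + (Finset.range (n + 1)).sup ℓ < n + 1 + 1 + (Finset.range (n + 1 + 1)).sup ℓ
    have h : (Finset.range (n + 1)).sup ℓ ≤ (Finset.range (n + 1 + 1)).sup ℓ :=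
      Finset.sup_mono (Finset.range_subset_range.2 (by omega))
    omega
  · show n < n + 1 + (Finset.range (n + 1)).sup ℓ
    omega
  · refine blockAlg_mono 𝒳 n ?_ _ (ht n)
    show ℓ n ≤ n + 1 + (Finset.range (n + 1)).sup ℓ
    have h : ℓ n ≤ (Finset.range (n + 1)).sup ℓ :=
      Finset.le_sup (Finset.mem_range.2 (by omega))
    omega
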